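/- arXiv:math-ph/0406033 — 4 statements merged into one kernel-verified Lean document; each statement's English description precedes it below -/
import Mathlib

section
/- Let $t > 0$, $B > 0$, and $n$ a positive integer. There exists a constant $C > 0$ such that for all $y \geq 0$, $\int_0^\infty s^{2n-1} e^{-Bs} e^{-s y/(t(s+t))}\,ds \leq \frac{C}{(1+y)^{2n}}$. -/
open MeasureTheory Real

lemma aux_integrableOn_pow_exp (m : ℕ) {r : ℝ} (hr : 0 < r) :
    IntegrableOn (fun s : ℝ => s ^ m * Real.exp (-(r * s))) (Set.Ioi 0) := by
  have h := integrableOn_rpow_mul_exp_neg_mul_rpow (s := (m : ℝ)) (p := 1)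
    (by exact lt_of_lt_of_le (by norm_num) (Nat.cast_nonneg m)) one_pos hr
  simpa [Real.rpow_one, Real.rpow_natCast] using h

lemma aux_integral_pow_exp (m : ℕ) {r : ℝ} (hr : 0 < r) :
    ∫ s in Set.Ioi (0:ℝ), s ^ m * Real.exp (-(r * s))
      = (1 / r) ^ (m + 1) * Real.Gamma (m + 1) := by
  have h := Real.integral_rpow_mul_exp_neg_mul_Ioi (a := (m : ℝ) + 1) (r := r)
    (by positivity) hr
  rw [show ((m : ℝ) + 1 - 1) = (m : ℝ) by ring] at h
  simp_rw [Real.rpow_natCast] at h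
  rw [h, ← Real.rpow_natCast (1 / r) (m + 1)]
  push_cast
  ring_nf

theorem integral_bound_combined (t B : ℝ) (ht : 0 < t) (hB : 0 < B) (n : ℕ) (hn : 1 ≤ n) :
    ∃ C : ℝ, 0 < C ∧ ∀ y : ℝ, 0 ≤ y →
      (∫ s in Set.Ioi (0:ℝ), s ^ (2 * n - 1) * Real.exp (-B * s) *
          Real.exp (-(s * y) / (t * (s + t)))) ≤ C / (1 + y) ^ (2 * n) := by
  set m : ℕ := 2 * n - 1 with hm
  have hm1 : m + 1 = 2 * n := by omega
  set c : ℝ := min B (1 / (2 * t ^ 2)) with hc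
  have hc0 : 0 < c := lt_min hB (by positivity)
  set a : ℝ := max 1 (4 * n * t) with ha
  have ha1 : (1 : ℝ) ≤ a := le_max_left _ _
  have ha0 : 0 < a := lt_of_lt_of_le one_pos ha1
  have hant : 4 * n * t ≤ a := le_max_right _ _
  set G : ℝ := Real.Gamma (2 * n) with hG
  have hG0 : 0 < G := Real.Gamma_pos_of_pos (by positivity)
  refine ⟨G * ((1 / c) ^ (2 * n) + a ^ (2 * n) * (1 / B) ^ (2 * n)), by positivity, ?_⟩
  intro y hy
  have h1y : (0 : ℝ) < 1 + y := by linarith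
  set g : ℝ → ℝ := fun s =>
    s ^ m * Real.exp (-(c * (1 + y) * s)) + Real.exp (-(y / (2 * t))) *
      (s ^ m * Real.exp (-(B * s))) with hg
  have hcy : 0 < c * (1 + y) := by positivity
  have hgi : IntegrableOn g (Set.Ioi 0) :=
    (aux_integrableOn_pow_exp m hcy).add
      ((aux_integrableOn_pow_exp m hB).const_mul _)
  have hfg : ∀ s ∈ Set.Ioi (0:ℝ), s ^ m * Real.exp (-B * s) *
      Real.exp (-(s * y) / (t * (s + t))) ≤ g s := by
    intro s hs
    rw [Set.mem_Ioi] at hs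
    have hst0 : 0 < t * (s + t) := by positivity
    rw [mul_assoc, ← Real.exp_add]
    rcases le_total s t with hst | hst
    · have key : c * (1 + y) * s ≤ B * s + s * y / (t * (s + t)) := by
        have h1 : c * s ≤ B * s :=
          mul_le_mul_of_nonneg_right (min_le_left _ _) hs.le
        have h3 : c * y * s ≤ s * y / (2 * t ^ 2) := by
          have hcle : c ≤ 1 / (2 * t ^ 2) := min_le_right _ _
          rw [div_eq_mul_inv, ← one_div]
          calc c * y * s ≤ 1 / (2 * t ^ 2) * y * s := by
                apply mul_le_mul_of_nonneg_right _ hs.le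
                exact mul_le_mul_of_nonneg_right hcle hy
            _ = s * y * (1 / (2 * t ^ 2)) := by ring
        have h4 : s * y / (2 * t ^ 2) ≤ s * y / (t * (s + t)) := by
          apply div_le_div_of_nonneg_left (by positivity) hst0
          nlinarith
        nlinarith
      have hex : Real.exp (-B * s + -(s * y) / (t * (s + t)))
          ≤ Real.exp (-(c * (1 + y) * s)) := by
        apply Real.exp_le_exp.mpr
        rw [neg_div]
        linarith
      have h5 : s ^ m * Real.exp (-B * s + -(s * y) / (t * (s + t)))
          ≤ s ^ m * Real.exp (-(c * (1 + y) * s)) :=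
        mul_le_mul_of_nonneg_left hex (by positivity)
      have h6 : 0 ≤ Real.exp (-(y / (2 * t))) * (s ^ m * Real.exp (-(B * s))) := by
        positivity
      rw [hg]
      dsimp only
      linarith
    · have key : y / (2 * t) ≤ s * y / (t * (s + t)) := by
        rw [div_le_div_iff₀ (by positivity) hst0]
        nlinarith [mul_nonneg (mul_nonneg hy ht.le) (sub_nonneg.mpr hst)]
      have hex : Real.exp (-B * s + -(s * y) / (t * (s + t)))
          ≤ Real.exp (-(y / (2 * t))) * Real.exp (-(B * s)) := by
        rw [← Real.exp_add]
        apply Real.exp_le_exp.mpr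
        rw [neg_div]
        linarith
      have h5 : s ^ m * Real.exp (-B * s + -(s * y) / (t * (s + t)))
          ≤ Real.exp (-(y / (2 * t))) * (s ^ m * Real.exp (-(B * s))) := by
        calc s ^ m * Real.exp (-B * s + -(s * y) / (t * (s + t)))
            ≤ s ^ m * (Real.exp (-(y / (2 * t))) * Real.exp (-(B * s))) :=
              mul_le_mul_of_nonneg_left hex (by positivity)
          _ = Real.exp (-(y / (2 * t))) * (s ^ m * Real.exp (-(B * s))) := by ring
      have h6 : 0 ≤ s ^ m * Real.exp (-(c * (1 + y) * s)) := by positivity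
      rw [hg]
      dsimp only
      linarith
  have hmono : (∫ s in Set.Ioi (0:ℝ), s ^ m * Real.exp (-B * s) *
      Real.exp (-(s * y) / (t * (s + t)))) ≤ ∫ s in Set.Ioi (0:ℝ), g s := by
    apply integral_mono_of_nonneg
    · refine (ae_restrict_iff' measurableSet_Ioi).mpr (Filter.Eventually.of_forall ?_)
      intro s hs
      rw [Set.mem_Ioi] at hs
      positivity
    · exact hgi
    · exact (ae_restrict_iff' measurableSet_Ioi).mpr (Filter.Eventually.of_forall hfg)
  have hgint : (∫ s in Set.Ioi (0:ℝ), g s)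
      = (1 / (c * (1 + y))) ^ (2 * n) * G +
        Real.exp (-(y / (2 * t))) * ((1 / B) ^ (2 * n) * G) := by
    rw [hg]
    rw [integral_add (aux_integrableOn_pow_exp m hcy)
      ((aux_integrableOn_pow_exp m hB).const_mul _)]
    rw [integral_const_mul, aux_integral_pow_exp m hcy, aux_integral_pow_exp m hB, hm1]
    have hcast : ((m:ℝ) + 1) = 2 * (n:ℝ) := by
      have := congrArg (Nat.cast : ℕ → ℝ) hm1
      push_cast at this
      linarith
    rw [hG, hcast]
  have hexp : Real.exp (-(y / (2 * t))) ≤ a ^ (2 * n) / (1 + y) ^ (2 * n) := by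
    rw [le_div_iff₀ (by positivity)]
    have h1 : 1 + y ≤ a * Real.exp (y / a) := by
      have h0 := Real.add_one_le_exp (y / a)
      have h2 : a * (y / a + 1) ≤ a * Real.exp (y / a) :=
        mul_le_mul_of_nonneg_left h0 ha0.le
      rw [mul_add, mul_one, mul_div_cancel₀ _ ha0.ne'] at h2
      linarith
    calc Real.exp (-(y / (2 * t))) * (1 + y) ^ (2 * n)
        ≤ Real.exp (-(y / (2 * t))) * (a * Real.exp (y / a)) ^ (2 * n) := by
          apply mul_le_mul_of_nonneg_left _ (Real.exp_pos _).le
          exact pow_le_pow_left₀ h1y.le h1 _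
      _ = a ^ (2 * n) * (Real.exp (-(y / (2 * t))) * Real.exp (y / a) ^ (2 * n)) := by
          rw [mul_pow]; ring
      _ ≤ a ^ (2 * n) * 1 := by
          apply mul_le_mul_of_nonneg_left _ (by positivity)
          rw [← Real.exp_nat_mul, ← Real.exp_add]
          apply Real.exp_le_one_iff.mpr
          have hya : (2 * (n:ℝ)) * (y / a) ≤ y / (2 * t) := by
            rw [mul_div_assoc', div_le_div_iff₀ ha0 (by positivity)]
            nlinarith [mul_nonneg hy ht.le]
          push_cast
          linarith
      _ = a ^ (2 * n) := mul_one _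
  rw [hm] at hmono
  refine le_trans hmono ?_
  rw [hgint]
  have e1 : (1 / (c * (1 + y))) ^ (2 * n) * G
      = G * (1 / c) ^ (2 * n) / (1 + y) ^ (2 * n) := by
    rw [one_div, mul_inv, mul_pow]
    field_simp
    rw [← mul_pow, one_div_mul_cancel h1y.ne', one_pow]
  have e2 : Real.exp (-(y / (2 * t))) * ((1 / B) ^ (2 * n) * G)
      ≤ a ^ (2 * n) / (1 + y) ^ (2 * n) * ((1 / B) ^ (2 * n) * G) :=
    mul_le_mul_of_nonneg_right hexp (by positivity)
  rw [e1]
  have e3 : a ^ (2 * n) / (1 + y) ^ (2 * n) * ((1 / B) ^ (2 * n) * G)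
      = G * (a ^ (2 * n) * (1 / B) ^ (2 * n)) / (1 + y) ^ (2 * n) := by ring
  rw [e3] at e2
  have e4 : G * ((1 / c) ^ (2 * n) + a ^ (2 * n) * (1 / B) ^ (2 * n)) / (1 + y) ^ (2 * n)
      = G * (1 / c) ^ (2 * n) / (1 + y) ^ (2 * n) +
        G * (a ^ (2 * n) * (1 / B) ^ (2 * n)) / (1 + y) ^ (2 * n) := by ring
  rw [e4]
  linarith
end

section
/- Let $\Gamma$ be a full-rank lattice in $\mathbb{R}^r$, $C$ a closed cone, $P$ a polynomial with nonnegative coefficients, and $t > 0$. Then there exists a constant $M$ such that for all $\tau \geq t$, $\sum_{\gamma \in C \cap \Gamma} P(|\gamma|/\sqrt{\tau}) e^{-|\gamma|^2/\tau} \leq M \tau^{r/2}$. -/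
open MeasureTheory

private lemma poly_aux_lsb (P : Polynomial ℝ) (hP : ∀ i, 0 ≤ P.coeff i) :
    ∃ K : ℝ, 0 ≤ K ∧ ∀ x : ℝ, 0 ≤ x → P.eval x ≤ K * Real.exp (x ^ 2 / 2) := by
  refine ⟨∑ i ∈ Finset.range (P.natDegree + 1), P.coeff i * Real.exp ((i : ℝ) ^ 2 / 2),
    Finset.sum_nonneg fun i _ => mul_nonneg (hP i) (Real.exp_nonneg _), fun x hx => ?_⟩
  rw [Polynomial.eval_eq_sum_range, Finset.sum_mul]
  refine Finset.sum_le_sum fun i _ => ?_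
  have h1 : x ^ i ≤ Real.exp ((i : ℝ) * x) := by
    rw [Real.exp_nat_mul]
    exact pow_le_pow_left₀ hx (by linarith [Real.add_one_le_exp x]) i
  have h2 : Real.exp ((i : ℝ) * x) ≤ Real.exp ((i : ℝ) ^ 2 / 2) * Real.exp (x ^ 2 / 2) := by
    rw [← Real.exp_add]
    exact Real.exp_le_exp.mpr (by nlinarith [sq_nonneg ((i : ℝ) - x)])
  calc P.coeff i * x ^ i
      ≤ P.coeff i * (Real.exp ((i : ℝ) ^ 2 / 2) * Real.exp (x ^ 2 / 2)) :=
        mul_le_mul_of_nonneg_left (h1.trans h2) (hP i)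
    _ = P.coeff i * Real.exp ((i : ℝ) ^ 2 / 2) * Real.exp (x ^ 2 / 2) := by ring


/-- For a full-rank lattice `Γ` in `ℝ^r`, a closed cone `C`, a polynomial `P` with
nonnegative coefficients, and `t > 0`, there is a constant `M` such that for all
`τ ≥ t`, `∑_{γ ∈ C ∩ Γ} P(|γ|/√τ) e^{-|γ|²/τ} ≤ M τ^{r/2}`. -/
theorem lattice_sum_bound (r : ℕ)
    (Γ : Submodule ℤ (EuclideanSpace ℝ (Fin r)))
    [DiscreteTopology Γ] [IsZLattice ℝ Γ]
    (C : Set (EuclideanSpace ℝ (Fin r))) (hC : IsClosed C)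
    (hcone : ∀ x ∈ C, ∀ s : ℝ, 0 ≤ s → s • x ∈ C)
    (P : Polynomial ℝ) (hP : ∀ i, 0 ≤ P.coeff i)
    (t : ℝ) (ht : 0 < t) :
    ∃ M : ℝ, ∀ τ : ℝ, t ≤ τ →
      (∑' γ : {γ : Γ // (γ : EuclideanSpace ℝ (Fin r)) ∈ C},
          P.eval (‖((γ : Γ) : EuclideanSpace ℝ (Fin r))‖ / Real.sqrt τ) *
            Real.exp (-‖((γ : Γ) : EuclideanSpace ℝ (Fin r))‖ ^ 2 / τ)) ≤
        M * τ ^ ((r : ℝ) / 2) := by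
  classical
  obtain ⟨K, hK0, hK⟩ := poly_aux_lsb P hP
  -- a separation radius for the lattice
  obtain ⟨ε, hε, hball⟩ : ∃ ε > 0, ∀ γ : Γ, dist γ 0 < ε → γ = 0 := by
    have h : IsOpen ({0} : Set Γ) := isOpen_discrete _
    rw [Metric.isOpen_iff] at h
    obtain ⟨ε, hε, hb⟩ := h 0 rfl
    exact ⟨ε, hε, fun γ hγ => hb (Metric.mem_ball.mpr hγ)⟩
  have hsep : ∀ γ δ : Γ, γ ≠ δ →
      ε ≤ dist (γ : EuclideanSpace ℝ (Fin r)) (δ : EuclideanSpace ℝ (Fin r)) := by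
    intro γ δ hne
    by_contra hlt
    push_neg at hlt
    apply hne
    have h0 : γ - δ = 0 := by
      apply hball
      rw [Subtype.dist_eq]
      simpa [dist_eq_norm] using hlt
    exact sub_eq_zero.mp h0
  set B0 := (volume (Metric.ball (0 : EuclideanSpace ℝ (Fin r)) (ε / 2))).toReal with hB0
  have hB0pos : 0 < B0 := by
    rw [hB0]
    exact ENNReal.toReal_pos (ne_of_gt (Metric.measure_ball_pos _ _ (by positivity)))
      measure_ball_lt_top.ne
  refine ⟨K * Real.exp (ε ^ 2 / (8 * t)) * (4 * Real.pi) ^ ((r : ℝ) / 2) / B0, fun τ hτ => ?_⟩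
  have hτ0 : 0 < τ := lt_of_lt_of_le ht hτ
  set f : EuclideanSpace ℝ (Fin r) → ℝ := fun x => Real.exp (-(4 * τ)⁻¹ * ‖x‖ ^ 2) with hf
  have hfint : Integrable f := by
    have h := GaussianFourier.integrable_cexp_neg_mul_sq_norm_add
      (V := EuclideanSpace ℝ (Fin r)) (b := ((4 * τ)⁻¹ : ℂ)) (by simp; positivity) 0 0
    have h2 := h.re
    refine h2.congr ?_
    filter_upwards with v
    have e : (-(4 * (τ : ℂ))⁻¹ * (‖v‖ : ℂ) ^ 2) = ((-(4 * τ)⁻¹ * ‖v‖ ^ 2 : ℝ) : ℂ) := by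
      push_cast; ring
    simp only [inner_zero_left, Complex.ofReal_zero, zero_mul, mul_zero, add_zero]
    rw [e]
    exact Complex.exp_ofReal_re _
  have hfnn : ∀ x, 0 ≤ f x := fun x => Real.exp_nonneg _
  have hfval : ∫ x, f x = (4 * Real.pi) ^ ((r : ℝ) / 2) * τ ^ ((r : ℝ) / 2) := by
    rw [hf]
    rw [GaussianFourier.integral_rexp_neg_mul_sq_norm (by positivity)]
    rw [finrank_euclideanSpace_fin]
    rw [show Real.pi / (4 * τ)⁻¹ = (4 * Real.pi) * τ by field_simp]
    rw [Real.mul_rpow (by positivity) hτ0.le]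
  apply tsum_le_of_sum_le'
  · exact mul_nonneg (div_nonneg (mul_nonneg (mul_nonneg hK0 (Real.exp_nonneg _))
      (Real.rpow_nonneg (by positivity) _)) hB0pos.le) (Real.rpow_nonneg hτ0.le _)
  intro F
  -- per-term bound by a Gaussian
  have hterm : ∀ γ : {γ : Γ // (γ : EuclideanSpace ℝ (Fin r)) ∈ C},
      P.eval (‖((γ : Γ) : EuclideanSpace ℝ (Fin r))‖ / Real.sqrt τ) *
        Real.exp (-‖((γ : Γ) : EuclideanSpace ℝ (Fin r))‖ ^ 2 / τ) ≤
      K * Real.exp (-‖((γ : Γ) : EuclideanSpace ℝ (Fin r))‖ ^ 2 / (2 * τ)) := by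
    intro γ
    set g := ‖((γ : Γ) : EuclideanSpace ℝ (Fin r))‖ with hg
    have hg0 : 0 ≤ g := norm_nonneg _
    have h1 : P.eval (g / Real.sqrt τ) ≤ K * Real.exp (g ^ 2 / τ / 2) := by
      have := hK (g / Real.sqrt τ) (by positivity)
      rwa [div_pow, Real.sq_sqrt hτ0.le] at this
    calc P.eval (g / Real.sqrt τ) * Real.exp (-g ^ 2 / τ)
        ≤ K * Real.exp (g ^ 2 / τ / 2) * Real.exp (-g ^ 2 / τ) :=
          mul_le_mul_of_nonneg_right h1 (Real.exp_nonneg _)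
      _ = K * Real.exp (g ^ 2 / τ / 2 + -g ^ 2 / τ) := by rw [Real.exp_add]; ring
      _ = K * Real.exp (-g ^ 2 / (2 * τ)) := by
          rw [show g ^ 2 / τ / 2 + -g ^ 2 / τ = -g ^ 2 / (2 * τ) by ring]
  -- each Gaussian value is controlled by the integral over a small ball
  have hball2 : ∀ γ : {γ : Γ // (γ : EuclideanSpace ℝ (Fin r)) ∈ C},
      B0 * (Real.exp (-(ε ^ 2 / (8 * t))) *
          Real.exp (-‖((γ : Γ) : EuclideanSpace ℝ (Fin r))‖ ^ 2 / (2 * τ))) ≤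
        ∫ x in Metric.ball (((γ : Γ) : EuclideanSpace ℝ (Fin r))) (ε / 2), f x := by
    intro γ
    set g := ‖((γ : Γ) : EuclideanSpace ℝ (Fin r))‖ with hg
    have hg0 : 0 ≤ g := norm_nonneg _
    have key := setIntegral_ge_of_const_le (μ := volume)
      (s := Metric.ball (((γ : Γ) : EuclideanSpace ℝ (Fin r))) (ε / 2)) (f := f)
      (c := Real.exp (-(ε ^ 2 / (8 * t))) * Real.exp (-g ^ 2 / (2 * τ)))
      Metric.isOpen_ball.measurableSet measure_ball_lt_top.ne ?_ hfint.integrableOn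
    · rw [Measure.addHaar_real_ball_center, smul_eq_mul] at key
      exact key
    · intro x hx
      have hxg : ‖x‖ ≤ g + ε / 2 := by
        have h1 : ‖x‖ - g ≤ ‖x - ((γ : Γ) : EuclideanSpace ℝ (Fin r))‖ := norm_sub_norm_le _ _
        have h2 : ‖x - ((γ : Γ) : EuclideanSpace ℝ (Fin r))‖ < ε / 2 := by
          rw [← dist_eq_norm]; exact hx
        linarith
      have h2 : ‖x‖ ^ 2 ≤ 2 * g ^ 2 + ε ^ 2 / 2 := by nlinarith [mul_self_le_mul_self (norm_nonneg x) hxg, sq_nonneg (g - ε / 2)]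
      have h3 : ε ^ 2 / (8 * τ) ≤ ε ^ 2 / (8 * t) :=
        div_le_div_of_nonneg_left (by positivity) (by positivity) (by linarith)
      have h4 : (4 * τ)⁻¹ * ‖x‖ ^ 2 ≤ g ^ 2 / (2 * τ) + ε ^ 2 / (8 * τ) := by
        rw [inv_mul_eq_div]
        calc ‖x‖ ^ 2 / (4 * τ) ≤ (2 * g ^ 2 + ε ^ 2 / 2) / (4 * τ) := by gcongr
          _ = g ^ 2 / (2 * τ) + ε ^ 2 / (8 * τ) := by ring
      rw [← Real.exp_add, hf]
      apply Real.exp_le_exp.mpr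
      have : -g ^ 2 / (2 * τ) = -(g ^ 2 / (2 * τ)) := by ring
      rw [this]
      linarith
  -- the balls are pairwise disjoint
  have hdisj : (↑F : Set {γ : Γ // (γ : EuclideanSpace ℝ (Fin r)) ∈ C}).Pairwise
      (Function.onFun Disjoint fun γ : {γ : Γ // (γ : EuclideanSpace ℝ (Fin r)) ∈ C} =>
        Metric.ball (((γ : Γ) : EuclideanSpace ℝ (Fin r))) (ε / 2)) := by
    intro γ _ δ _ hne
    apply Metric.ball_disjoint_ball
    have hne' : (γ : Γ) ≠ (δ : Γ) := fun h => hne (Subtype.ext h)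
    have := hsep _ _ hne'
    linarith
  have hsum2 : ∑ γ ∈ F, (∫ x in Metric.ball (((γ : Γ) : EuclideanSpace ℝ (Fin r))) (ε / 2), f x)
      ≤ ∫ x, f x := by
    rw [← integral_biUnion_finset F (fun _ _ => Metric.isOpen_ball.measurableSet) hdisj
      (fun _ _ => hfint.integrableOn)]
    exact setIntegral_le_integral hfint (Filter.Eventually.of_forall hfnn)
  -- bound the partial sum of Gaussians
  have hS : ∑ γ ∈ F, Real.exp (-‖((γ : Γ) : EuclideanSpace ℝ (Fin r))‖ ^ 2 / (2 * τ)) ≤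
      Real.exp (ε ^ 2 / (8 * t)) / B0 * ((4 * Real.pi) ^ ((r : ℝ) / 2) * τ ^ ((r : ℝ) / 2)) := by
    have h1 : B0 * Real.exp (-(ε ^ 2 / (8 * t))) *
        ∑ γ ∈ F, Real.exp (-‖((γ : Γ) : EuclideanSpace ℝ (Fin r))‖ ^ 2 / (2 * τ)) ≤
        (4 * Real.pi) ^ ((r : ℝ) / 2) * τ ^ ((r : ℝ) / 2) := by
      rw [mul_assoc]
      simp_rw [Finset.mul_sum]
      calc ∑ γ ∈ F, B0 * (Real.exp (-(ε ^ 2 / (8 * t))) *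
              Real.exp (-‖((γ : Γ) : EuclideanSpace ℝ (Fin r))‖ ^ 2 / (2 * τ))) ≤
          ∑ γ ∈ F, ∫ x in Metric.ball (((γ : Γ) : EuclideanSpace ℝ (Fin r))) (ε / 2), f x :=
            Finset.sum_le_sum fun γ _ => hball2 γ
        _ ≤ ∫ x, f x := hsum2
        _ = _ := hfval
    have hc : 0 < B0 * Real.exp (-(ε ^ 2 / (8 * t))) := by positivity
    have h2 : ∑ γ ∈ F, Real.exp (-‖((γ : Γ) : EuclideanSpace ℝ (Fin r))‖ ^ 2 / (2 * τ)) ≤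
        ((4 * Real.pi) ^ ((r : ℝ) / 2) * τ ^ ((r : ℝ) / 2)) /
          (B0 * Real.exp (-(ε ^ 2 / (8 * t)))) := by
      rw [le_div_iff₀ hc]
      rw [mul_comm] at h1
      exact h1
    refine h2.trans_eq ?_
    rw [Real.exp_neg]
    field_simp
  calc ∑ γ ∈ F, P.eval (‖((γ : Γ) : EuclideanSpace ℝ (Fin r))‖ / Real.sqrt τ) *
        Real.exp (-‖((γ : Γ) : EuclideanSpace ℝ (Fin r))‖ ^ 2 / τ)
      ≤ ∑ γ ∈ F, K * Real.exp (-‖((γ : Γ) : EuclideanSpace ℝ (Fin r))‖ ^ 2 / (2 * τ)) :=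
        Finset.sum_le_sum fun γ _ => hterm γ
    _ = K * ∑ γ ∈ F, Real.exp (-‖((γ : Γ) : EuclideanSpace ℝ (Fin r))‖ ^ 2 / (2 * τ)) := by
        rw [Finset.mul_sum]
    _ ≤ K * (Real.exp (ε ^ 2 / (8 * t)) / B0 *
        ((4 * Real.pi) ^ ((r : ℝ) / 2) * τ ^ ((r : ℝ) / 2))) :=
        mul_le_mul_of_nonneg_left hS hK0
    _ = K * Real.exp (ε ^ 2 / (8 * t)) * (4 * Real.pi) ^ ((r : ℝ) / 2) / B0 *
        τ ^ ((r : ℝ) / 2) := by ring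
end

section
/- Let $t > 0$, $d \geq 1$, $|\delta|^2 \geq 0$, and $n \geq 1$. Define $\phi_{n,c}(y) = \left[(c + d/dt)^n \left((\pi t)^{-d/2} e^{-|\delta|^2 t} e^{-y/t}\right)\right] / \left((\pi t)^{-d/2} e^{-|\delta|^2 t} e^{-y/t}\right)$ for $y \geq 0$. Then $\phi_{n,c}$ is a polynomial in $y$ of degree $n$, and for all sufficiently large $c > 0$, every coefficient of this polynomial is positive; in particular $\phi_{n,c}(y) > 0$ for all $y \geq 0$. -/
open Real

noncomputable section ToeplitzAux

open Polynomial

/-- `ℝ[y]` -/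
abbrev S0 := Polynomial ℝ
/-- `(ℝ[y])[u]`, where `u` stands for `1/s`. -/
abbrev T0 := Polynomial S0

variable (a b : ℝ)

/-- `a + b u + y u²`, the multiplier arising from `(d/ds) f / f` (with `a = -δ², b = -d/2`). -/
def A0 : T0 := C (C a) + C (C b) * X + C (X : S0) * X ^ 2

/-- coefficient polynomials: `P c n = ∑ j, c^j • Qp n j`. -/
def Qp : ℕ → ℕ → T0
  | 0, j => if j = 0 then 1 else 0
  | n+1, j => (if j = 0 then 0 else Qp n (j-1)) + A0 a b * Qp n j - X^2 * derivative (Qp n j)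

/-- `Pp c n` represents `(c + d/ds)^n f / f` as an element of `(ℝ[y])[u]`, `u = 1/s`. -/
def Pp (c : ℝ) : ℕ → T0
  | 0 => 1
  | n+1 => (C (C c) + A0 a b) * Pp c n - X^2 * derivative (Pp c n)

lemma Qp_zero : ∀ n j, n < j → Qp a b n j = 0 := by
  intro n
  induction n with
  | zero => intro j hj; rw [Qp, if_neg (by omega)]
  | succ n ih =>
    intro j hj
    match j, hj with
    | j+1, hj =>
      rw [Qp, if_neg (by omega)]
      simp only [Nat.add_sub_cancel]
      rw [ih j (by omega), ih (j+1) (by omega)]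
      simp

/-- `W` has `y`-degree at most `m`. -/
def YDegLE (m : ℕ) (W : T0) : Prop := ∀ i l, m < l → (W.coeff i).coeff l = 0

lemma YDegLE.mono {m m' : ℕ} {W : T0} (h : YDegLE m W) (hm : m ≤ m') : YDegLE m' W :=
  fun i l hl => h i l (lt_of_le_of_lt hm hl)

lemma YDegLE.zero (m : ℕ) : YDegLE m (0 : T0) := by intro i l _; simp

lemma YDegLE.one (m : ℕ) : YDegLE m (1 : T0) := by
  intro i l hl
  rw [Polynomial.coeff_one]
  split
  · rw [Polynomial.coeff_one, if_neg (by omega)]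
  · simp

lemma YDegLE.add {m : ℕ} {U W : T0} (hU : YDegLE m U) (hW : YDegLE m W) :
    YDegLE m (U + W) := by
  intro i l hl; simp [hU i l hl, hW i l hl]

lemma YDegLE.sub {m : ℕ} {U W : T0} (hU : YDegLE m U) (hW : YDegLE m W) :
    YDegLE m (U - W) := by
  intro i l hl; simp [hU i l hl, hW i l hl]

lemma YDegLE.mul {m k : ℕ} {U W : T0} (hU : YDegLE m U) (hW : YDegLE k W) :
    YDegLE (m + k) (U * W) := by
  intro i l hl
  rw [Polynomial.coeff_mul, Polynomial.finset_sum_coeff]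
  apply Finset.sum_eq_zero
  intro p hp
  rw [Polynomial.coeff_mul]
  apply Finset.sum_eq_zero
  intro q hq
  have hq' := Finset.HasAntidiagonal.mem_antidiagonal.mp hq
  rcases lt_or_ge m q.1 with h | h
  · rw [hU p.1 q.1 h, zero_mul]
  · rw [hW p.2 q.2 (by omega), mul_zero]

lemma YDegLE.derivative {m : ℕ} {W : T0} (hW : YDegLE m W) :
    YDegLE m (derivative W) := by
  intro i l hl
  rw [Polynomial.coeff_derivative]
  rw [show ((i : S0) + 1) = Polynomial.C ((i : ℝ) + 1) by simp]
  rw [Polynomial.coeff_mul_C, hW (i+1) l hl, zero_mul]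

lemma ydeg_X_pow (k : ℕ) : YDegLE 0 ((X : T0) ^ k) := by
  intro i l hl
  rw [Polynomial.coeff_X_pow]
  split
  · rw [Polynomial.coeff_one, if_neg (by omega)]
  · simp

lemma ydeg_A0 : YDegLE 1 (A0 a b) := by
  intro i l hl
  simp only [A0, Polynomial.coeff_add, Polynomial.coeff_C_mul, Polynomial.coeff_C,
    Polynomial.coeff_X, Polynomial.coeff_X_pow]
  split_ifs <;>
    first
      | omega
      | simp [Polynomial.coeff_C, Polynomial.coeff_X, Polynomial.coeff_one,
          if_neg (show ¬ l = 0 by omega), if_neg (show ¬ 1 = l by omega)]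

lemma ydeg_Qp : ∀ n j, YDegLE (n - j) (Qp a b n j) := by
  intro n
  induction n with
  | zero =>
    intro j
    rw [Qp]
    split
    · exact YDegLE.one _
    · exact YDegLE.zero _
  | succ n ih =>
    intro j
    rw [Qp]
    rcases Nat.lt_or_ge n j with h | h
    · rw [Qp_zero a b n j h]
      simp only [mul_zero, map_zero, sub_zero, add_zero]
      split
      · exact YDegLE.zero _
      · exact (ih (j-1)).mono (by omega)
    · refine YDegLE.sub (YDegLE.add ?_ ?_) ?_
      · split
        · exact YDegLE.zero _
        · exact (ih (j-1)).mono (by omega)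
      · exact ((ydeg_A0 a b).mul (ih j)).mono (by omega)
      · exact ((ydeg_X_pow 2).mul (ih j).derivative).mono (by omega)

lemma ydeg_lin : YDegLE 0 (C (C a) + C (C b) * X : T0) := by
  intro i l hl
  simp only [Polynomial.coeff_add, Polynomial.coeff_C_mul, Polynomial.coeff_C,
    Polynomial.coeff_X]
  split_ifs <;>
    simp [Polynomial.coeff_C, Polynomial.coeff_one, if_neg (show ¬ l = 0 by omega)]

lemma topcoeff : ∀ n j l, j + l = n → ∀ i,
    ((Qp a b n j).coeff i).coeff l = if i = 2*l then (n.choose j : ℝ) else 0 := by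
  intro n
  induction n with
  | zero =>
    intro j l hjl i
    obtain ⟨rfl, rfl⟩ : j = 0 ∧ l = 0 := by omega
    rw [Qp, if_pos rfl]
    rw [Polynomial.coeff_one]
    split_ifs with h1 <;> simp_all
  | succ n ih =>
    intro j l hjl i
    rcases Nat.lt_or_ge n j with hj | hj
    · -- j = n+1, l = 0
      obtain ⟨rfl, rfl⟩ : j = n + 1 ∧ l = 0 := by omega
      rw [Qp, if_neg (by omega), Qp_zero a b n (n+1) (by omega)]
      simp only [Nat.add_sub_cancel, mul_zero, map_zero, sub_zero, add_zero]
      rw [ih n 0 (by omega) i]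
      simp
    · -- j ≤ n, l ≥ 1
      obtain ⟨l', rfl⟩ : ∃ l', l = l' + 1 := ⟨l - 1, by omega⟩
      set W := Qp a b n j with hWdef
      have hAW : A0 a b * W = (C (C a) + C (C b) * X) * W + C (X : S0) * (X^2 * W) := by
        rw [A0]; ring
      rw [Qp, hAW]
      simp only [Polynomial.coeff_add, Polynomial.coeff_sub]
      have hydeg : YDegLE (n - j) W := ydeg_Qp a b n j
      have h3 : ((X^2 * derivative W).coeff i).coeff (l'+1) = 0 :=
        ((ydeg_X_pow 2).mul hydeg.derivative) i (l'+1) (by omega)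
      have h2a : (((C (C a) + C (C b) * X) * W).coeff i).coeff (l'+1) = 0 :=
        ((ydeg_lin a b).mul hydeg) i (l'+1) (by omega)
      rw [h3, h2a]
      rw [Polynomial.coeff_C_mul, Polynomial.coeff_X_mul]
      have h2b : (X^2 * W).coeff i = if 2 ≤ i then W.coeff (i - 2) else 0 := by
        rw [mul_comm, Polynomial.coeff_mul_X_pow']
      rw [h2b]
      have hsec : (if 2 ≤ i then W.coeff (i - 2) else 0).coeff l'
          = if i = 2*(l'+1) then (n.choose j : ℝ) else 0 := by
        split_ifs with h h' h'
        · rw [hWdef, ih j l' (by omega) (i-2), if_pos (by omega)]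
        · rw [hWdef, ih j l' (by omega) (i-2), if_neg (by omega)]
        · omega
        · simp
      rw [hsec]
      -- predecessor term
      match j with
      | 0 =>
        rw [if_pos rfl]
        simp
      | j'+1 =>
        rw [if_neg (by omega)]
        simp only [Nat.add_sub_cancel]
        rw [ih j' (l'+1) (by omega) i]
        split_ifs with h
        · rw [Nat.choose_succ_succ n j']
          push_cast
          ring
        · simp

lemma Pp_decomp (c : ℝ) : ∀ n,
    Pp a b c n = ∑ j ∈ Finset.range (n+1), C (C (c^j)) * Qp a b n j := by
  intro n
  induction n with
  | zero => simp [Pp, Qp]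
  | succ n ih =>
    rw [Pp, ih, Finset.mul_sum, Polynomial.derivative_sum, Finset.mul_sum,
      ← Finset.sum_sub_distrib]
    have lhs_eq : ∀ j ∈ Finset.range (n+1),
        (C (C c) + A0 a b) * (C (C (c^j)) * Qp a b n j)
          - X^2 * derivative (C (C (c^j)) * Qp a b n j)
        = C (C (c^(j+1))) * Qp a b n j + C (C (c^j)) * (A0 a b * Qp a b n j)
          - C (C (c^j)) * (X^2 * derivative (Qp a b n j)) := by
      intro j _
      rw [Polynomial.derivative_C_mul, show (c^(j+1)) = c^j * c from pow_succ c j,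
        map_mul, map_mul]
      ring
    rw [Finset.sum_congr rfl lhs_eq]
    have rhs_eq : ∀ j ∈ Finset.range (n+2),
        C (C (c^j)) * Qp a b (n+1) j
        = C (C (c^j)) * (if j = 0 then 0 else Qp a b n (j-1))
          + C (C (c^j)) * (A0 a b * Qp a b n j)
          - C (C (c^j)) * (X^2 * derivative (Qp a b n j)) := by
      intro j _
      rw [Qp]
      ring
    rw [Finset.sum_congr rfl rhs_eq, Finset.sum_sub_distrib, Finset.sum_add_distrib]
    rw [Finset.sum_sub_distrib, Finset.sum_add_distrib]
    congr 1
    congr 1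
    · rw [Finset.sum_range_succ' (fun j => C (C (c^j)) * (if j = 0 then 0 else Qp a b n (j-1)))]
      simp
    · conv_rhs => rw [Finset.sum_range_succ]
      rw [Qp_zero a b n (n+1) (by omega)]
      simp
    · conv_rhs => rw [Finset.sum_range_succ]
      rw [Qp_zero a b n (n+1) (by omega)]
      simp

/-- Evaluation of `W ∈ (ℝ[y])[u]` at `u = s⁻¹`, `y = y`. -/
def Vv (W : T0) (s y : ℝ) : ℝ := (W.map (evalRingHom y)).eval s⁻¹

lemma Vv_one (s y : ℝ) : Vv 1 s y = 1 := by simp [Vv]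
lemma Vv_mul (W₁ W₂ : T0) (s y : ℝ) : Vv (W₁ * W₂) s y = Vv W₁ s y * Vv W₂ s y := by
  simp [Vv]
lemma Vv_sub (W₁ W₂ : T0) (s y : ℝ) : Vv (W₁ - W₂) s y = Vv W₁ s y - Vv W₂ s y := by
  simp [Vv]
lemma Vv_add (W₁ W₂ : T0) (s y : ℝ) : Vv (W₁ + W₂) s y = Vv W₁ s y + Vv W₂ s y := by
  simp [Vv]
lemma Vv_X_sq (s y : ℝ) : Vv (X^2) s y = (s⁻¹)^2 := by simp [Vv]
lemma Vv_A0 (s y : ℝ) : Vv (A0 a b) s y = a + b * s⁻¹ + y * (s⁻¹)^2 := by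
  simp [Vv, A0]
lemma Vv_CC (r : ℝ) (s y : ℝ) : Vv (C (C r)) s y = r := by simp [Vv]

lemma Vv_hasDerivAt (W : T0) (s y : ℝ) (hs : s ≠ 0) :
    HasDerivAt (fun u : ℝ => Vv W u y) (Vv (derivative W) s y * (-(s^2)⁻¹)) s := by
  have h1 : HasDerivAt (fun u : ℝ => u⁻¹) (-(s^2)⁻¹) s := hasDerivAt_inv hs
  have h2 := (W.map (evalRingHom y)).hasDerivAt (s⁻¹)
  have := h2.comp s h1
  simpa [Vv, Polynomial.derivative_map, mul_comm, Function.comp_def] using this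

/-- the Gaussian-type factor -/
def Ff (d : ℕ) (δ2 : ℝ) (s y : ℝ) : ℝ :=
  (Real.pi * s) ^ (-(d : ℝ) / 2) * Real.exp (-δ2 * s) * Real.exp (-y / s)

lemma Ff_pos (d : ℕ) (δ2 : ℝ) (s y : ℝ) (hs : 0 < s) : 0 < Ff d δ2 s y := by
  have : (0:ℝ) < Real.pi * s := by positivity
  unfold Ff
  positivity

lemma Ff_hasDerivAt (d : ℕ) (δ2 : ℝ) (s y : ℝ) (hs : 0 < s) :
    HasDerivAt (fun u : ℝ => Ff d δ2 u y)
      (((-δ2) + (-(d:ℝ)/2) * s⁻¹ + y * (s^2)⁻¹) * Ff d δ2 s y) s := by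
  have hπs : Real.pi * s ≠ 0 := by positivity
  have h1 : HasDerivAt (fun u : ℝ => (Real.pi * u) ^ (-(d:ℝ)/2))
      ((-(d:ℝ)/2) * (Real.pi * s) ^ ((-(d:ℝ)/2) - 1) * Real.pi) s := by
    have hlin : HasDerivAt (fun u : ℝ => Real.pi * u) Real.pi s := by
      simpa using (hasDerivAt_id s).const_mul Real.pi
    have := hlin.rpow_const (p := -(d:ℝ)/2) (Or.inl hπs)
    convert this using 1
    ring
  have h2 : HasDerivAt (fun u : ℝ => Real.exp (-δ2 * u)) (Real.exp (-δ2 * s) * (-δ2)) s := by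
    have : HasDerivAt (fun u : ℝ => -δ2 * u) (-δ2) s := by
      simpa using (hasDerivAt_id s).const_mul (-δ2)
    exact this.exp
  have h3 : HasDerivAt (fun u : ℝ => Real.exp (-y / u)) (Real.exp (-y / s) * (y * (s^2)⁻¹)) s := by
    have hinner : HasDerivAt (fun u : ℝ => -y / u) (y * (s^2)⁻¹) s := by
      have := (hasDerivAt_inv hs.ne').const_mul (-y)
      have heq : (fun u : ℝ => -y * u⁻¹) = fun u : ℝ => -y / u := by
        funext u; rw [div_eq_mul_inv]
      rw [heq] at this
      exact this.congr_deriv (by ring)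
    exact hinner.exp
  have := (h1.mul h2).mul h3
  refine this.congr_deriv ?_
  have key : (-(d:ℝ)/2) * (Real.pi * s) ^ ((-(d:ℝ)/2) - 1) * Real.pi
      = ((-(d:ℝ)/2) * s⁻¹) * (Real.pi * s) ^ (-(d:ℝ)/2) := by
    rw [Real.rpow_sub (by positivity : (0:ℝ) < Real.pi * s), Real.rpow_one]
    field_simp
  unfold Ff
  rw [key]
  simp only [Pi.mul_apply]
  ring

lemma key_formula (d : ℕ) (δ2 : ℝ) (g : ℝ → ℕ → ℝ → ℝ → ℝ) (c : ℝ)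
    (hg0 : ∀ s y : ℝ,
      g c 0 s y = (Real.pi * s) ^ (-(d : ℝ) / 2) * Real.exp (-δ2 * s) * Real.exp (-y / s))
    (hgsucc : ∀ m : ℕ, ∀ s y : ℝ,
      g c (m + 1) s y = c * g c m s y + deriv (fun u : ℝ => g c m u y) s) :
    ∀ m : ℕ, ∀ s : ℝ, 0 < s → ∀ y : ℝ,
      g c m s y = Ff d δ2 s y * Vv (Pp (-δ2) (-(d:ℝ)/2) c m) s y := by
  intro m
  induction m with
  | zero =>
    intro s hs y
    rw [hg0, Pp, Vv_one, mul_one]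
    rfl
  | succ m ih =>
    intro s hs y
    rw [hgsucc]
    have hev : deriv (fun u : ℝ => g c m u y) s
        = deriv (fun u : ℝ => Ff d δ2 u y * Vv (Pp (-δ2) (-(d:ℝ)/2) c m) u y) s := by
      apply Filter.EventuallyEq.deriv_eq
      filter_upwards [isOpen_Ioi.mem_nhds (Set.mem_Ioi.mpr hs)] with u hu
      exact ih u hu y
    have hder := (Ff_hasDerivAt d δ2 s y hs).mul
      (Vv_hasDerivAt (Pp (-δ2) (-(d:ℝ)/2) c m) s y hs.ne')
    rw [hev, show (fun u : ℝ => Ff d δ2 u y * Vv (Pp (-δ2) (-(d:ℝ)/2) c m) u y) = (fun u : ℝ => Ff d δ2 u y) * (fun u : ℝ => Vv (Pp (-δ2) (-(d:ℝ)/2) c m) u y) from rfl, hder.deriv, ih s hs y]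
    rw [Pp, Vv_sub, Vv_mul, Vv_add, Vv_CC, Vv_A0, Vv_mul, Vv_X_sq]
    rw [inv_pow]
    ring

lemma eval_swap (W : T0) (x y : ℝ) :
    (W.eval (C x)).eval y = ((W.map (evalRingHom y)).eval x) := by
  induction W using Polynomial.induction_on' with
  | add p q hp hq => simp [hp, hq]
  | monomial i s => simp [Polynomial.eval_monomial, Polynomial.map_monomial]

lemma coeff_eval_C (W : T0) (x : ℝ) (l : ℕ) :
    (W.eval (C x)).coeff l
      = ∑ i ∈ Finset.range (W.natDegree + 1), (W.coeff i).coeff l * x ^ i := by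
  rw [Polynomial.eval_eq_sum_range, Polynomial.finset_sum_coeff]
  apply Finset.sum_congr rfl
  intro i _
  rw [← Polynomial.C_pow, Polynomial.coeff_mul_C]

lemma eval_eventually_pos (p : Polynomial ℝ) (hp : 0 < p.leadingCoeff) :
    ∀ᶠ c in Filter.atTop, 0 < p.eval c := by
  rcases lt_or_ge 0 p.degree with hdeg | hdeg
  · exact (Polynomial.tendsto_atTop_of_leadingCoeff_nonneg p hdeg hp.le).eventually_gt_atTop 0
  · have := Polynomial.eq_C_of_degree_le_zero hdeg
    rw [this]
    filter_upwards with c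
    simp only [Polynomial.eval_C]
    have h0 : p.leadingCoeff = p.coeff 0 := by
      rw [Polynomial.leadingCoeff, Polynomial.natDegree_eq_zero_iff_degree_le_zero.mpr hdeg]
    rwa [← h0]

/-- The coefficient `w_{l,j}`: coefficient of `y^l` in `(Qp n j)(u := x)`. -/
def wcoef (x : ℝ) (n l j : ℕ) : ℝ := ((Qp a b n j).eval (C x)).coeff l

lemma wcoef_zero (x : ℝ) (n l j : ℕ) (h : n < j + l) : wcoef a b x n l j = 0 := by
  rcases Nat.lt_or_ge n j with h' | h'
  · rw [wcoef, Qp_zero a b n j h']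
    simp
  · rw [wcoef, coeff_eval_C]
    apply Finset.sum_eq_zero
    intro i _
    rw [ydeg_Qp a b n j i l (by omega), zero_mul]

lemma wcoef_top (x : ℝ) (n l j : ℕ) (h : j + l = n) :
    wcoef a b x n l j = (n.choose j : ℝ) * x ^ (2*l) := by
  have hc := topcoeff a b n j l h (2*l)
  rw [if_pos rfl] at hc
  have hch : 0 < n.choose j := Nat.choose_pos (by omega)
  have hne : (Qp a b n j).coeff (2*l) ≠ 0 := by
    intro h0
    rw [h0] at hc
    simp only [Polynomial.coeff_zero] at hc
    exact hch.ne' (by exact_mod_cast hc.symm)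
  have h2l : 2*l ≤ (Qp a b n j).natDegree := Polynomial.le_natDegree_of_ne_zero hne
  rw [wcoef, coeff_eval_C]
  have : ∀ i ∈ Finset.range ((Qp a b n j).natDegree + 1),
      ((Qp a b n j).coeff i).coeff l * x ^ i
        = if i = 2*l then (n.choose j : ℝ) * x ^ i else 0 := by
    intro i _
    rw [topcoeff a b n j l h i, ite_mul, zero_mul]
  rw [Finset.sum_congr rfl this, Finset.sum_ite_eq' (Finset.range _) (2*l)
    (fun i => (n.choose j : ℝ) * x ^ i), if_pos (Finset.mem_range.mpr (by omega))]

lemma pc_coeff (x c : ℝ) (n l : ℕ) :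
    ((Pp a b c n).eval (C x)).coeff l
      = ∑ j ∈ Finset.range (n+1), wcoef a b x n l j * c ^ j := by
  rw [Pp_decomp, Polynomial.eval_finset_sum, Polynomial.finset_sum_coeff]
  apply Finset.sum_congr rfl
  intro j _
  rw [Polynomial.eval_mul, Polynomial.eval_C, Polynomial.coeff_C_mul, wcoef, mul_comm]

/-- the coefficient of `y^l`, as a polynomial in `c`. -/
def qpol (x : ℝ) (n l : ℕ) : Polynomial ℝ :=
  ∑ j ∈ Finset.range (n+1), Polynomial.monomial j (wcoef a b x n l j)

lemma qpol_eval (x c : ℝ) (n l : ℕ) :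
    (qpol a b x n l).eval c = ((Pp a b c n).eval (C x)).coeff l := by
  rw [qpol, Polynomial.eval_finset_sum, pc_coeff]
  apply Finset.sum_congr rfl
  intro j _
  rw [Polynomial.eval_monomial]

lemma qpol_coeff (x : ℝ) (n l m : ℕ) :
    (qpol a b x n l).coeff m = if m ≤ n then wcoef a b x n l m else 0 := by
  rw [qpol, Polynomial.finset_sum_coeff]
  have : ∀ j ∈ Finset.range (n+1), (Polynomial.monomial j (wcoef a b x n l j)).coeff m
      = if j = m then wcoef a b x n l j else 0 := by
    intro j _
    rw [Polynomial.coeff_monomial]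
  rw [Finset.sum_congr rfl this, Finset.sum_ite_eq' (Finset.range _) m
    (fun j => wcoef a b x n l j)]
  simp [Finset.mem_range, Nat.lt_succ_iff]

lemma qpol_natDegree (x : ℝ) (hx : x ≠ 0) (n l : ℕ) (hl : l ≤ n) :
    (qpol a b x n l).natDegree = n - l := by
  apply le_antisymm
  · rw [Polynomial.natDegree_le_iff_coeff_eq_zero]
    intro m hm
    rw [qpol_coeff]
    split
    · exact wcoef_zero a b x n l m (by omega)
    · rfl
  · apply Polynomial.le_natDegree_of_ne_zero
    rw [qpol_coeff, if_pos (by omega), wcoef_top a b x n l (n-l) (by omega)]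
    have : 0 < n.choose (n-l) := Nat.choose_pos (by omega)
    positivity

lemma qpol_leadingCoeff_pos (x : ℝ) (hx : 0 < x) (n l : ℕ) (hl : l ≤ n) :
    0 < (qpol a b x n l).leadingCoeff := by
  rw [Polynomial.leadingCoeff, qpol_natDegree a b x hx.ne' n l hl, qpol_coeff,
    if_pos (by omega), wcoef_top a b x n l (n-l) (by omega)]
  have : 0 < n.choose (n-l) := Nat.choose_pos (by omega)
  positivity

/-- natDegree (in `y`) of the evaluated polynomial is `n`. -/
lemma pc_natDegree (x c : ℝ) (hx : x ≠ 0) (n : ℕ) :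
    ((Pp a b c n).eval (C x)).natDegree = n := by
  apply le_antisymm
  · rw [Polynomial.natDegree_le_iff_coeff_eq_zero]
    intro l hl
    rw [pc_coeff]
    apply Finset.sum_eq_zero
    intro j _
    rw [wcoef_zero a b x n l j (by omega), zero_mul]
  · apply Polynomial.le_natDegree_of_ne_zero
    rw [pc_coeff]
    rw [Finset.sum_eq_single 0 (fun j _ hj => by
      rw [wcoef_zero a b x n n j (by omega), zero_mul]) (by simp)]
    rw [wcoef_top a b x n n 0 (by omega)]
    simp only [Nat.choose_zero_right, Nat.cast_one, one_mul, pow_zero, mul_one]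
    exact pow_ne_zero _ hx

end ToeplitzAux

/-- Scalar model of Proposition 3.7: with `f y s = (π s)^{-d/2} e^{-|δ|² s} e^{-y/s}` and
`g c m` defined by the recursion `g c 0 = f`, `g c (m+1) = c · g c m + (d/ds) g c m`
(i.e. `g c n = (c + d/dt)^n f`), the symbol `φ_{n,c}(y) = g c n t y / f y t` is a
polynomial in `y` of degree `n`; and for all sufficiently large `c > 0` all its
coefficients are positive, so in particular `φ_{n,c}(y) > 0` for all `y ≥ 0`. -/
theorem toeplitz_symbol_polynomial_positive (d : ℕ) (hd : 1 ≤ d) (δ2 : ℝ) (hδ2 : 0 ≤ δ2)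
    (t : ℝ) (ht : 0 < t) (n : ℕ) (hn : 1 ≤ n)
    (g : ℝ → ℕ → ℝ → ℝ → ℝ)
    (hg0 : ∀ c : ℝ, ∀ s y : ℝ,
      g c 0 s y = (Real.pi * s) ^ (-(d : ℝ) / 2) * Real.exp (-δ2 * s) * Real.exp (-y / s))
    (hgsucc : ∀ c : ℝ, ∀ m : ℕ, ∀ s y : ℝ,
      g c (m + 1) s y = c * g c m s y + deriv (fun u : ℝ => g c m u y) s) :
    (∀ c : ℝ, ∃ p : Polynomial ℝ, p.natDegree = n ∧
      ∀ y : ℝ, g c n t y /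
        ((Real.pi * t) ^ (-(d : ℝ) / 2) * Real.exp (-δ2 * t) * Real.exp (-y / t)) =
          p.eval y) ∧
    ∃ c₀ : ℝ, 0 < c₀ ∧ ∀ c : ℝ, c₀ ≤ c →
      ∃ p : Polynomial ℝ, p.natDegree = n ∧
        (∀ y : ℝ, g c n t y /
          ((Real.pi * t) ^ (-(d : ℝ) / 2) * Real.exp (-δ2 * t) * Real.exp (-y / t)) =
            p.eval y) ∧
        (∀ i : ℕ, i ≤ n → 0 < p.coeff i) ∧
        (∀ y : ℝ, 0 ≤ y → 0 < p.eval y) := by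
  set a : ℝ := -δ2 with ha
  set b : ℝ := -(d:ℝ)/2 with hb
  have htinv : (0:ℝ) < t⁻¹ := inv_pos.mpr ht
  -- the polynomial for a given c
  set P : ℝ → Polynomial ℝ := fun c => (Pp a b c n).eval (Polynomial.C t⁻¹) with hP
  -- the evaluation formula
  have heval : ∀ c y : ℝ, g c n t y /
      ((Real.pi * t) ^ (-(d : ℝ) / 2) * Real.exp (-δ2 * t) * Real.exp (-y / t))
        = (P c).eval y := by
    intro c y
    have hk := key_formula d δ2 g c (hg0 c) (hgsucc c) n t ht y
    have hF : ((Real.pi * t) ^ (-(d : ℝ) / 2) * Real.exp (-δ2 * t) * Real.exp (-y / t))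
        = Ff d δ2 t y := rfl
    rw [hF, hk, hP]
    rw [mul_div_cancel_left₀ _ (Ff_pos d δ2 t y ht).ne']
    rw [eval_swap]
    rfl
  have hdeg : ∀ c : ℝ, (P c).natDegree = n := fun c => pc_natDegree a b t⁻¹ c htinv.ne' n
  refine ⟨fun c => ⟨P c, hdeg c, heval c⟩, ?_⟩
  -- eventual positivity of all coefficients
  have hev : ∀ᶠ c in Filter.atTop, ∀ l ∈ Finset.range (n+1), 0 < (qpol a b t⁻¹ n l).eval c := by
    rw [Filter.eventually_all_finset]
    intro l hl
    exact eval_eventually_pos _ (qpol_leadingCoeff_pos a b t⁻¹ htinv n l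
      (Nat.lt_succ_iff.mp (Finset.mem_range.mp hl)))
  obtain ⟨c₁, hc₁⟩ := Filter.eventually_atTop.mp hev
  refine ⟨max c₁ 1, lt_of_lt_of_le one_pos (le_max_right _ _), ?_⟩
  intro c hc
  have hcoeffpos : ∀ i : ℕ, i ≤ n → 0 < (P c).coeff i := by
    intro i hi
    have := hc₁ c (le_trans (le_max_left _ _) hc) i (Finset.mem_range.mpr (by omega))
    rwa [qpol_eval] at this
  refine ⟨P c, hdeg c, heval c, hcoeffpos, ?_⟩
  intro y hy
  rw [Polynomial.eval_eq_sum_range, hdeg c]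
  apply Finset.sum_pos'
  · intro i hi
    exact mul_nonneg (hcoeffpos i (Nat.lt_succ_iff.mp (Finset.mem_range.mp hi))).le
      (pow_nonneg hy i)
  · refine ⟨0, Finset.mem_range.mpr (by omega), ?_⟩
    simpa using hcoeffpos 0 (by omega)
end

section
/- Let $t > 0$ and let $F: \mathbb{C} \to \mathbb{C}$ be holomorphic. Suppose that for every positive integer $n$ there is a constant $A_n$ with $|F(x+iy)|^2 \leq A_n \frac{e^{y^2/t}}{(1+x^2+y^2)^{2n}}$ for all $x, y \in \mathbb{R}$. Then for every polynomial $p$ and every $m \geq 0$, the function $z \mapsto p(x,y) F^{(m)}(z)$ is square-integrable with respect to the measure $(\pi t)^{-1/2} e^{-y^2/t}\,dx\,dy$ on $\mathbb{C}$. -/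
open MeasureTheory Real
set_option maxHeartbeats 1000000

lemma poly_bound' (p : MvPolynomial (Fin 2) ℝ) :
    ∃ C : ℝ, ∃ N : ℕ, ∀ x y : ℝ,
      |MvPolynomial.eval ![x, y] p| ≤ C * (1 + x ^ 2 + y ^ 2) ^ N := by
  induction p using MvPolynomial.induction_on with
  | C a => exact ⟨|a|, 0, fun x y => by simp⟩
  | add p q hp hq =>
    obtain ⟨C1, N1, h1⟩ := hp
    obtain ⟨C2, N2, h2⟩ := hq
    refine ⟨|C1| + |C2|, max N1 N2, fun x y => ?_⟩
    have hS : 1 ≤ 1 + x ^ 2 + y ^ 2 := by nlinarith [sq_nonneg x, sq_nonneg y]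
    have e1 : C1 * (1 + x ^ 2 + y ^ 2) ^ N1 ≤ |C1| * (1 + x ^ 2 + y ^ 2) ^ (max N1 N2) := by
      have := pow_le_pow_right₀ hS (le_max_left N1 N2)
      nlinarith [le_abs_self C1, abs_nonneg C1, pow_nonneg (by linarith : (0:ℝ) ≤ 1 + x^2+y^2) N1]
    have e2 : C2 * (1 + x ^ 2 + y ^ 2) ^ N2 ≤ |C2| * (1 + x ^ 2 + y ^ 2) ^ (max N1 N2) := by
      have := pow_le_pow_right₀ hS (le_max_right N1 N2)
      nlinarith [le_abs_self C2, abs_nonneg C2, pow_nonneg (by linarith : (0:ℝ) ≤ 1 + x^2+y^2) N2]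
    calc |MvPolynomial.eval ![x, y] (p + q)|
        ≤ |MvPolynomial.eval ![x, y] p| + |MvPolynomial.eval ![x, y] q| := by
          rw [map_add]; exact abs_add_le _ _
      _ ≤ C1 * (1 + x ^ 2 + y ^ 2) ^ N1 + C2 * (1 + x ^ 2 + y ^ 2) ^ N2 :=
          add_le_add (h1 x y) (h2 x y)
      _ ≤ (|C1| + |C2|) * (1 + x ^ 2 + y ^ 2) ^ (max N1 N2) := by nlinarith [e1, e2]
  | mul_X p i hp =>
    obtain ⟨C, N, h⟩ := hp
    refine ⟨C, N + 1, fun x y => ?_⟩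
    have hv : |(![x, y] : Fin 2 → ℝ) i| ≤ 1 + x ^ 2 + y ^ 2 := by
      fin_cases i
      · simpa using by nlinarith [sq_nonneg (|x| - 1), sq_abs x, sq_nonneg y, abs_nonneg x] 
      · simpa using by nlinarith [sq_nonneg (|y| - 1), sq_abs y, sq_nonneg x, abs_nonneg y]
    rw [map_mul, MvPolynomial.eval_X, abs_mul]
    have h0 : (0:ℝ) ≤ C * (1 + x ^ 2 + y ^ 2) ^ N := le_trans (abs_nonneg _) (h x y)
    calc |MvPolynomial.eval ![x, y] p| * |(![x, y] : Fin 2 → ℝ) i|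
        ≤ (C * (1 + x ^ 2 + y ^ 2) ^ N) * (1 + x ^ 2 + y ^ 2) :=
          mul_le_mul (h x y) hv (abs_nonneg _) h0
      _ = C * (1 + x ^ 2 + y ^ 2) ^ (N + 1) := by ring

lemma deriv_transfer' (t : ℝ) (ht : 0 < t) (F : ℂ → ℂ) (hF : Differentiable ℂ F)
    (hb : ∀ n : ℕ, 1 ≤ n → ∃ A : ℝ, ∀ x y : ℝ,
      ‖F (x + y * Complex.I)‖ ^ 2 ≤
        A * Real.exp (y ^ 2 / t) / (1 + x ^ 2 + y ^ 2) ^ (2 * n)) :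
    ∀ n : ℕ, 1 ≤ n → ∃ A : ℝ, ∀ x y : ℝ,
      ‖deriv F (x + y * Complex.I)‖ ^ 2 ≤
        A * Real.exp (y ^ 2 / t) / (1 + x ^ 2 + y ^ 2) ^ (2 * n) := by
  intro n hn
  obtain ⟨A, hA⟩ := hb (n + 1) (by omega)
  have hA0 : 0 ≤ A := by
    have h0 := hA 0 0
    have h1 : (0:ℝ) ≤ A * Real.exp ((0:ℝ) ^ 2 / t) / (1 + (0:ℝ) ^ 2 + (0:ℝ) ^ 2) ^ (2 * (n+1)) :=
      le_trans (by positivity) h0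
    simpa using h1
  refine ⟨2 * Real.exp (3 / t) * 5 ^ (2 * (n + 1)) * A, fun x y => ?_⟩
  set S : ℝ := 1 + x ^ 2 + y ^ 2 with hSdef
  have hS1 : 1 ≤ S := by nlinarith [sq_nonneg x, sq_nonneg y]
  have hS0 : 0 < S := by linarith
  set r : ℝ := 1 / (1 + |y|) with hrdef
  have hr : 0 < r := by positivity
  have hr1 : r ≤ 1 := by
    rw [hrdef, div_le_one (by positivity)]; linarith [abs_nonneg y]
  have hry : r * |y| ≤ 1 := by
    rw [hrdef, div_mul_eq_mul_div, div_le_one (by positivity)]; linarith [abs_nonneg y]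
  set B : ℝ := A * Real.exp (3 / t) * Real.exp (y ^ 2 / t) * 5 ^ (2 * (n + 1)) / S ^ (2 * (n + 1))
    with hBdef
  have hB0 : 0 ≤ B := by positivity
  set z : ℂ := x + y * Complex.I with hzdef
  have claim1 : ∀ w ∈ Metric.sphere z r, ‖F w‖ ≤ Real.sqrt B := by
    intro w hw
    set u : ℝ := w.re
    set v : ℝ := w.im
    have hdist : ‖w - z‖ = r := by simpa [Complex.dist_eq] using (Metric.mem_sphere.mp hw)
    have hure : (w - z).re = u - x := by simp [hzdef]; rfl
    have huim : (w - z).im = v - y := by simp [hzdef]; rfl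
    have hu : |u - x| ≤ r := by
      rw [← hure]; rw [← hdist]; exact Complex.abs_re_le_norm _
    have hv : |v - y| ≤ r := by
      rw [← huim]; rw [← hdist]; exact Complex.abs_im_le_norm _
    have hu2 : (u - x) ^ 2 ≤ r ^ 2 := by
      have := abs_le.mp hu; nlinarith [this.1, this.2]
    have hv2 : (v - y) ^ 2 ≤ r ^ 2 := by
      have := abs_le.mp hv; nlinarith [this.1, this.2]
    have hyv : y * (v - y) ≤ |y| * r := by
      calc y * (v - y) ≤ |y * (v - y)| := le_abs_self _
        _ = |y| * |v - y| := abs_mul _ _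
        _ ≤ |y| * r := by nlinarith [abs_nonneg y, hv]
    have hvbound : v ^ 2 ≤ y ^ 2 + 3 := by nlinarith [hv2, hyv, hry, hr1, hr.le]
    have hSbound : S ≤ 5 * (1 + u ^ 2 + v ^ 2) := by
      rw [hSdef]
      nlinarith [hu2, hv2, hr1, hr.le, sq_nonneg (u + (u - x)), sq_nonneg (v + (v - y)),
        sq_nonneg u, sq_nonneg v]
    have hw' : w = (u : ℂ) + (v : ℂ) * Complex.I := (Complex.re_add_im w).symm
    have hFw : ‖F w‖ ^ 2 ≤ A * Real.exp (v ^ 2 / t) / (1 + u ^ 2 + v ^ 2) ^ (2 * (n + 1)) := by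
      rw [hw']; exact hA u v
    have hTw : 0 < (1 + u ^ 2 + v ^ 2) := by nlinarith [sq_nonneg u, sq_nonneg v]
    have hFB : ‖F w‖ ^ 2 ≤ B := by
      refine le_trans hFw ?_
      rw [hBdef, div_le_div_iff₀ (by positivity) (by positivity)]
      have hnum : A * Real.exp (v ^ 2 / t) ≤ A * Real.exp (3 / t) * Real.exp (y ^ 2 / t) := by
        rw [mul_assoc, ← Real.exp_add]
        have : v ^ 2 / t ≤ 3 / t + y ^ 2 / t := by
          rw [← add_div]
          gcongr
          linarith
        exact mul_le_mul_of_nonneg_left (Real.exp_le_exp.mpr this) hA0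
      have hden : S ^ (2 * (n + 1)) ≤ 5 ^ (2 * (n + 1)) * (1 + u ^ 2 + v ^ 2) ^ (2 * (n + 1)) := by
        rw [← mul_pow]
        exact pow_le_pow_left₀ hS0.le hSbound _
      calc A * Real.exp (v ^ 2 / t) * S ^ (2 * (n + 1))
          ≤ (A * Real.exp (3 / t) * Real.exp (y ^ 2 / t)) *
            (5 ^ (2 * (n + 1)) * (1 + u ^ 2 + v ^ 2) ^ (2 * (n + 1))) := by
            apply mul_le_mul hnum hden (by positivity) (by positivity)
        _ = A * Real.exp (3 / t) * Real.exp (y ^ 2 / t) * 5 ^ (2 * (n + 1)) *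
            (1 + u ^ 2 + v ^ 2) ^ (2 * (n + 1)) := by ring
    calc ‖F w‖ = Real.sqrt (‖F w‖ ^ 2) := (Real.sqrt_sq (norm_nonneg _)).symm
      _ ≤ Real.sqrt B := Real.sqrt_le_sqrt hFB
  have claim2 : ‖deriv F z‖ ≤ Real.sqrt B / r :=
    Complex.norm_deriv_le_of_forall_mem_sphere_norm_le hr hF.diffContOnCl claim1
  have hpow : S * S ^ (2 * n) ≤ S ^ (2 * (n + 1)) := by
    have h1 : (0:ℝ) ≤ S ^ (2 * n) * S := mul_nonneg (pow_nonneg hS0.le _) hS0.le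
    have h2 := mul_le_mul_of_nonneg_left hS1 h1
    calc S * S ^ (2 * n) = S ^ (2 * n) * S * 1 := by ring
      _ ≤ S ^ (2 * n) * S * S := h2
      _ = S ^ (2 * (n + 1)) := by ring
  calc ‖deriv F z‖ ^ 2 ≤ (Real.sqrt B / r) ^ 2 :=
        pow_le_pow_left₀ (norm_nonneg _) claim2 2
    _ = B / r ^ 2 := by rw [div_pow, Real.sq_sqrt hB0]
    _ = B * (1 + |y|) ^ 2 := by rw [hrdef]; field_simp
    _ ≤ B * (2 * S) := by
        apply mul_le_mul_of_nonneg_left ?_ hB0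
        rw [hSdef]
        nlinarith [sq_nonneg (|y| - 1), sq_abs y, sq_nonneg x]
    _ ≤ 2 * Real.exp (3 / t) * 5 ^ (2 * (n + 1)) * A * Real.exp (y ^ 2 / t) / S ^ (2 * n) := by
        rw [hBdef, div_mul_eq_mul_div, div_le_div_iff₀ (by positivity) (by positivity)]
        have hc : (0:ℝ) ≤ 2 * A * Real.exp (3 / t) * Real.exp (y ^ 2 / t) * 5 ^ (2 * (n + 1)) := by
          positivity
        calc A * Real.exp (3 / t) * Real.exp (y ^ 2 / t) * 5 ^ (2 * (n + 1)) * (2 * S) * S ^ (2 * n)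
            = (2 * A * Real.exp (3 / t) * Real.exp (y ^ 2 / t) * 5 ^ (2 * (n + 1))) *
              (S * S ^ (2 * n)) := by ring
          _ ≤ (2 * A * Real.exp (3 / t) * Real.exp (y ^ 2 / t) * 5 ^ (2 * (n + 1))) *
              S ^ (2 * (n + 1)) := mul_le_mul_of_nonneg_left hpow hc
          _ = 2 * Real.exp (3 / t) * 5 ^ (2 * (n + 1)) * A * Real.exp (y ^ 2 / t) *
              S ^ (2 * (n + 1)) := by ring

lemma integS2 : Integrable (fun z : ℂ => ((1 + z.re ^ 2 + z.im ^ 2) ^ 2)⁻¹) volume := by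
  have h4 : ((Module.finrank ℝ ℂ : ℝ)) < (4:ℝ) := by
    simp [Complex.finrank_real_complex]; norm_num
  have h := (integrable_one_add_norm (E := ℂ) (μ := volume) h4).const_mul 4
  refine h.mono' ?_ (ae_of_all _ fun z => ?_)
  · apply Continuous.aestronglyMeasurable
    have : Continuous fun z : ℂ => (1 + z.re ^ 2 + z.im ^ 2) ^ 2 := by continuity
    exact this.inv₀ (fun z => by positivity)
  · have h1 : ‖z‖ ^ 2 = z.re ^ 2 + z.im ^ 2 := by
      rw [Complex.sq_norm, Complex.normSq_apply]; ring
    have hS0 : (0:ℝ) < 1 + z.re ^ 2 + z.im ^ 2 := by positivity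
    have h2 : (1 + ‖z‖) ^ 2 ≤ 2 * (1 + z.re ^ 2 + z.im ^ 2) := by
      nlinarith [norm_nonneg z, sq_nonneg (1 - ‖z‖)]
    have h3 : (1 + ‖z‖) ^ (4:ℕ) ≤ 4 * (1 + z.re ^ 2 + z.im ^ 2) ^ 2 := by
      nlinarith [h2, sq_nonneg ((1 + ‖z‖)^2), norm_nonneg z, hS0]
    have hrw : (1 + ‖z‖) ^ (4:ℝ) = (1 + ‖z‖) ^ (4:ℕ) := by
      rw [← Real.rpow_natCast]; norm_num
    rw [Real.norm_of_nonneg (by positivity)]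
    have hneg : (1 + ‖z‖) ^ (-4:ℝ) = ((1 + ‖z‖) ^ (4:ℕ))⁻¹ := by
      rw [show (-4:ℝ) = -((4:ℕ):ℝ) by norm_num, Real.rpow_neg (by positivity),
        Real.rpow_natCast]
    rw [hneg]
    calc ((1 + z.re ^ 2 + z.im ^ 2) ^ 2)⁻¹ ≤ ((1 + ‖z‖) ^ (4:ℕ) / 4)⁻¹ := by
          apply inv_anti₀ (by positivity)
          linarith [h3]
      _ = 4 * ((1 + ‖z‖) ^ (4:ℕ))⁻¹ := by rw [inv_div]; ring

/-- If a holomorphic `F : ℂ → ℂ` satisfies, for every positive integer `n`, a bound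
`|F(x+iy)|² ≤ Aₙ e^{y²/t}/(1+x²+y²)^{2n}`, then for every (two-variable) polynomial `p`
and every `m ≥ 0`, the function `z ↦ p(x,y) F^{(m)}(z)` is square-integrable with respect
to `(πt)^{-1/2} e^{-y²/t} dx dy` on `ℂ`. -/
theorem schwartz_image_derivatives_L2 (t : ℝ) (ht : 0 < t)
    (F : ℂ → ℂ) (hF : Differentiable ℂ F)
    (hbound : ∀ n : ℕ, 1 ≤ n → ∃ A : ℝ, ∀ x y : ℝ,
      ‖F (x + y * Complex.I)‖ ^ 2 ≤
        A * Real.exp (y ^ 2 / t) / (1 + x ^ 2 + y ^ 2) ^ (2 * n))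
    (p : MvPolynomial (Fin 2) ℝ) (m : ℕ) :
    MemLp
      (fun z : ℂ => (MvPolynomial.eval ![z.re, z.im] p : ℂ) * iteratedDeriv m F z) 2
      (volume.withDensity (fun z : ℂ =>
        ENNReal.ofReal ((Real.pi * t) ^ (-(1 : ℝ) / 2) * Real.exp (-z.im ^ 2 / t)))) := by
  have hπt : (0:ℝ) < Real.pi * t := mul_pos Real.pi_pos ht
  -- the iterated derivatives satisfy the same bounds
  have iter : ∀ k : ℕ, Differentiable ℂ (iteratedDeriv k F) ∧
      ∀ n : ℕ, 1 ≤ n → ∃ A : ℝ, ∀ x y : ℝ,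
        ‖iteratedDeriv k F (x + y * Complex.I)‖ ^ 2 ≤
          A * Real.exp (y ^ 2 / t) / (1 + x ^ 2 + y ^ 2) ^ (2 * n) := by
    intro k
    induction k with
    | zero =>
      refine ⟨by simpa [iteratedDeriv_zero] using hF, ?_⟩
      simpa [iteratedDeriv_zero] using hbound
    | succ k ih =>
      have hd : Differentiable ℂ (deriv (iteratedDeriv k F)) := by
        have h := ((ih.1).contDiff (n := (2:ℕ))).differentiable_iteratedDeriv 1 (by norm_cast)
        rwa [iteratedDeriv_one] at h
      constructor
      · rw [iteratedDeriv_succ]; exact hd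
      · simp only [iteratedDeriv_succ]
        exact deriv_transfer' t ht _ ih.1 ih.2
  obtain ⟨hFm, hbm⟩ := iter m
  obtain ⟨C, N, hpN⟩ := poly_bound' p
  obtain ⟨A, hA⟩ := hbm (N + 1) (by omega)
  have hC0 : 0 ≤ C := by
    have h := hpN 0 0
    have h' : |MvPolynomial.eval ![(0:ℝ), 0] p| ≤ C := by simpa using h
    linarith [abs_nonneg (MvPolynomial.eval ![(0:ℝ), 0] p)]
  have hA0 : 0 ≤ A := by
    have h0 := hA 0 0
    have h1 : (0:ℝ) ≤ A * Real.exp ((0:ℝ) ^ 2 / t) / (1 + (0:ℝ) ^ 2 + (0:ℝ) ^ 2) ^ (2 * (N + 1)) :=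
      le_trans (by positivity) h0
    simpa using h1
  set f : ℂ → ℂ :=
    fun z => (MvPolynomial.eval ![z.re, z.im] p : ℂ) * iteratedDeriv m F z with hfdef
  have hvec : Continuous fun z : ℂ => (![z.re, z.im] : Fin 2 → ℝ) := by
    refine continuous_pi fun i => ?_
    fin_cases i
    · simpa using Complex.continuous_re
    · simpa using Complex.continuous_im
  have hcont : Continuous f := by
    exact ((Complex.continuous_ofReal.comp ((p.continuous_eval).comp hvec)).mul
      (hFm.continuous))
  have hwc : Continuous fun z : ℂ =>
      (Real.pi * t) ^ (-(1:ℝ)/2) * Real.exp (-z.im ^ 2 / t) := by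
    apply continuous_const.mul
    exact Real.continuous_exp.comp (by continuity)
  have hw_meas : Measurable (fun z : ℂ =>
      ENNReal.ofReal ((Real.pi * t) ^ (-(1:ℝ)/2) * Real.exp (-z.im ^ 2 / t))) :=
    (ENNReal.continuous_ofReal.comp hwc).measurable
  have hw_nonneg : ∀ z : ℂ, 0 ≤ (Real.pi * t) ^ (-(1:ℝ)/2) * Real.exp (-z.im ^ 2 / t) :=
    fun z => mul_nonneg (Real.rpow_nonneg hπt.le _) (Real.exp_nonneg _)
  refine (memLp_two_iff_integrable_sq_norm hcont.aestronglyMeasurable).mpr ?_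
  rw [integrable_withDensity_iff hw_meas (ae_of_all _ fun z => ENNReal.ofReal_lt_top)]
  have hrw : (fun z : ℂ => ‖f z‖ ^ 2 *
        (ENNReal.ofReal ((Real.pi * t) ^ (-(1:ℝ)/2) * Real.exp (-z.im ^ 2 / t))).toReal) =
      fun z : ℂ => ‖f z‖ ^ 2 * ((Real.pi * t) ^ (-(1:ℝ)/2) * Real.exp (-z.im ^ 2 / t)) :=
    funext fun z => by rw [ENNReal.toReal_ofReal (hw_nonneg z)]
  rw [hrw]
  set D : ℝ := C ^ 2 * A * (Real.pi * t) ^ (-(1:ℝ)/2) with hDdef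
  refine Integrable.mono' (integS2.const_mul D) ?_ (ae_of_all _ fun z => ?_)
  · exact ((hcont.norm.pow 2).mul hwc).aestronglyMeasurable
  · set x : ℝ := z.re with hxdef
    set y : ℝ := z.im with hydef
    set S : ℝ := 1 + x ^ 2 + y ^ 2 with hSdef
    have hS0 : (0:ℝ) < S := by positivity
    have hz : z = (x : ℂ) + (y : ℂ) * Complex.I := (Complex.re_add_im z).symm
    have hid : ‖iteratedDeriv m F z‖ ^ 2 ≤ A * Real.exp (y ^ 2 / t) / S ^ (2 * (N + 1)) := by
      rw [hz]; exact hA x y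
    have hnormf : ‖f z‖ ^ 2 = |MvPolynomial.eval ![x, y] p| ^ 2 * ‖iteratedDeriv m F z‖ ^ 2 := by
      rw [hfdef]; simp [norm_mul, mul_pow, Complex.norm_real, Real.norm_eq_abs]; left; rfl
    have hexp : Real.exp (y ^ 2 / t) * Real.exp (-y ^ 2 / t) = 1 := by
      rw [← Real.exp_add, show y ^ 2 / t + -y ^ 2 / t = 0 by ring, Real.exp_zero]
    have hfrac : (S ^ N) ^ 2 / S ^ (2 * (N + 1)) = (S ^ 2)⁻¹ := by
      rw [show S ^ (2 * (N + 1)) = (S ^ N) ^ 2 * S ^ 2 by ring,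
        div_mul_eq_div_div, div_self (pow_ne_zero 2 (pow_ne_zero N hS0.ne')), one_div]
    rw [Real.norm_of_nonneg (mul_nonneg (by positivity) (hw_nonneg z))]
    calc ‖f z‖ ^ 2 * ((Real.pi * t) ^ (-(1:ℝ)/2) * Real.exp (-y ^ 2 / t))
        = |MvPolynomial.eval ![x, y] p| ^ 2 * ‖iteratedDeriv m F z‖ ^ 2 *
            ((Real.pi * t) ^ (-(1:ℝ)/2) * Real.exp (-y ^ 2 / t)) := by rw [hnormf]
      _ ≤ (C * S ^ N) ^ 2 * (A * Real.exp (y ^ 2 / t) / S ^ (2 * (N + 1))) *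
            ((Real.pi * t) ^ (-(1:ℝ)/2) * Real.exp (-y ^ 2 / t)) := by
          apply mul_le_mul_of_nonneg_right ?_ (hw_nonneg z)
          exact mul_le_mul (pow_le_pow_left₀ (abs_nonneg _) (hpN x y) 2) hid
            (sq_nonneg _) (sq_nonneg _)
      _ = (C ^ 2 * A * (Real.pi * t) ^ (-(1:ℝ)/2)) * ((S ^ N) ^ 2 / S ^ (2 * (N + 1))) *
            (Real.exp (y ^ 2 / t) * Real.exp (-y ^ 2 / t)) := by ring
      _ = D * (S ^ 2)⁻¹ := by rw [hexp, mul_one, hfrac, hDdef]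
end
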